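/- If I is a line segment of length at most 1 in a normed space, r > 1, δ > 0, and k ≥ 4/δ is a positive integer, then the δ-restricted r-dimensional Hausdorff premeasure of the open (1/k)-neighbourhood of I is at most 4^r · k^{-(r-1)}. -/

import Mathlib

open Metric EMetric Set
open scoped ENNReal NNReal

/-- The δ-restricted r-dimensional Hausdorff premeasure. -/
noncomputable def preHausdorff {X : Type*} [EMetricSpace X] (r δ : ℝ) (E : Set X) : ℝ≥0∞ :=
  ⨅ (S : ℕ → Set X) (_ : E ⊆ ⋃ i, S i) (_ : ∀ i, EMetric.diam (S i) ≤ ENNReal.ofReal δ),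
    ∑' i, EMetric.diam (S i) ^ r

theorem stmt0 {E : Type*} [NormedAddCommGroup E] [NormedSpace ℝ E]
    (a b : E) (hab : ‖a - b‖ ≤ 1) (r δ : ℝ) (hr : 1 < r) (hδ : 0 < δ)
    (k : ℕ) (hk : 0 < k) (hkδ : 4 / δ ≤ (k : ℝ)) :
    preHausdorff r δ (Metric.thickening (1 / k) (segment ℝ a b)) ≤
      ENNReal.ofReal (4 ^ r * (k : ℝ) ^ (-(r - 1))) := by
  have hkR : (0:ℝ) < (k:ℝ) := by exact_mod_cast hk
  have hr0 : (0:ℝ) < r := lt_trans one_pos hr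
  -- centers
  set c : ℕ → E := fun i => a + ((i:ℝ) / k) • (b - a) with hc
  set S : ℕ → Set E := fun i => if i < k then Metric.ball (c i) (2 / k) else ∅ with hS
  have h4kδ : 4 / (k:ℝ) ≤ δ := by
    rw [div_le_iff₀ hkR]
    have h4 : (4:ℝ) ≤ k * δ := (div_le_iff₀ hδ).1 hkδ
    nlinarith
  -- diameter bound
  have hdiamS : ∀ i, EMetric.diam (S i) ≤ ENNReal.ofReal (4 / k) := by
    intro i
    by_cases hi : i < k
    · have : S i = Metric.ball (c i) (2 / k) := by simp [hS, hi]
      rw [this, ← Metric.emetric_ball]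
      refine le_trans EMetric.diam_ball ?_
      rw [← ENNReal.ofReal_ofNat 2, ← ENNReal.ofReal_mul (by norm_num)]
      apply ENNReal.ofReal_le_ofReal
      apply le_of_eq; ring
    · simp [hS, hi, EMetric.diam, EMetric.diam_empty]
  have hdiamδ : ∀ i, EMetric.diam (S i) ≤ ENNReal.ofReal δ :=
    fun i => le_trans (hdiamS i) (ENNReal.ofReal_le_ofReal h4kδ)
  -- coverage
  have hcov : Metric.thickening (1 / k) (segment ℝ a b) ⊆ ⋃ i, S i := by
    intro x hx
    rw [Metric.mem_thickening_iff] at hx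
    obtain ⟨z, hz, hxz⟩ := hx
    rw [segment_eq_image'] at hz
    obtain ⟨t, ht, rfl⟩ := hz
    obtain ⟨ht0, ht1⟩ := ht
    set i : ℕ := min (k - 1) ⌊t * k⌋₊ with hi
    have hik : i < k := lt_of_le_of_lt (min_le_left _ _) (Nat.sub_lt hk one_pos)
    have h1 : (i:ℝ) ≤ t * k := le_trans (by exact_mod_cast min_le_right (k-1) _)
      (Nat.floor_le (by positivity))
    have h2 : t * k ≤ (i:ℝ) + 1 := by
      by_cases hcase : ⌊t * k⌋₊ ≤ k - 1
      · have : i = ⌊t * k⌋₊ := min_eq_right hcase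
        rw [this]
        exact le_of_lt (Nat.lt_floor_add_one _)
      · have : i = k - 1 := min_eq_left (le_of_not_ge hcase)
        rw [this]
        have : ((k - 1 : ℕ) : ℝ) + 1 = (k:ℝ) := by
          have : (1:ℕ) ≤ k := hk
          push_cast [Nat.cast_sub this]
          ring
        rw [this]
        nlinarith
    have hti : |t - (i:ℝ)/k| ≤ 1 / k := by
      have hik1 : (i:ℝ)/k ≤ t := by
        rw [div_le_iff₀ hkR]; exact h1
      have hik2 : t ≤ ((i:ℝ)+1)/k := by
        rw [le_div_iff₀ hkR]; exact h2
      have h1kp : (0:ℝ) < 1/k := by positivity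
      rw [abs_le]
      constructor
      · linarith
      · have : ((i:ℝ)+1)/k = (i:ℝ)/k + 1/k := by ring
        linarith
    have hzc : dist (a + t • (b - a)) (c i) ≤ 1 / k := by
      rw [dist_eq_norm]
      have : a + t • (b - a) - c i = (t - (i:ℝ)/k) • (b - a) := by
        simp [hc]; module
      rw [this, norm_smul, Real.norm_eq_abs]
      calc |t - (i:ℝ)/k| * ‖b - a‖ ≤ (1/k) * 1 := by
            apply mul_le_mul hti ?_ (norm_nonneg _) (by positivity)
            rw [norm_sub_rev]; exact hab
      _ = 1 / k := by ring
    refine Set.mem_iUnion.2 ⟨i, ?_⟩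
    have hxi : dist x (c i) < 2 / k :=
      calc dist x (c i) ≤ dist x (a + t • (b - a)) + dist (a + t • (b - a)) (c i) :=
            dist_triangle _ _ _
      _ < 1/k + 1/k := by
            exact add_lt_add_of_lt_of_le hxz hzc
      _ = 2 / k := by ring
    simp [hS, hik, Metric.mem_ball, hxi]
  -- plug into the infimum
  refine le_trans (iInf_le_of_le S (iInf_le_of_le hcov (iInf_le_of_le hdiamδ le_rfl))) ?_
  -- sum bound
  have hzero : ∀ i ∉ Finset.range k, EMetric.diam (S i) ^ r = 0 := by
    intro i hi
    rw [Finset.mem_range] at hi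
    simp [hS, hi, EMetric.diam, EMetric.diam_empty, ENNReal.zero_rpow_of_pos hr0]
  rw [tsum_eq_sum hzero]
  have hterm : ∀ i ∈ Finset.range k,
      EMetric.diam (S i) ^ r ≤ ENNReal.ofReal ((4 / k) ^ r) := by
    intro i _
    rw [← ENNReal.ofReal_rpow_of_nonneg (by positivity) (le_of_lt hr0)]
    exact ENNReal.rpow_le_rpow (hdiamS i) (le_of_lt hr0)
  refine le_trans (Finset.sum_le_sum hterm) ?_
  rw [Finset.sum_const, Finset.card_range, nsmul_eq_mul]
  have hcast : (k : ℝ≥0∞) = ENNReal.ofReal (k : ℝ) := by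
    simp [ENNReal.ofReal_natCast]
  rw [hcast, ← ENNReal.ofReal_mul (by positivity)]
  apply ENNReal.ofReal_le_ofReal
  have : (k:ℝ) * (4 / k) ^ r = 4 ^ r * (k:ℝ) ^ (-(r-1)) := by
    rw [Real.div_rpow (by norm_num) (le_of_lt hkR), neg_sub, Real.rpow_sub hkR,
      Real.rpow_one]
    ring
  rw [this]
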